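/- Let F be a field of characteristic p > 0 and let {a₁,…,a_m} ⊆ F be p-independent over F. Let φ = ⟨1,a₁,…,a_m⟩ (a minimal quasilinear p-form of dimension m+1, anisotropic over F). Then the full splitting pattern of φ is {1,2,…,m+1}: for every field extension E/F one has 1 ≤ dim(φ_E)_an ≤ m+1, and conversely for every integer 1 ≤ j ≤ m+1 there exists a field extension E/F with dim(φ_E)_an = j. -/

import Mathlib

open scoped BigOperators

set_option synthInstance.maxHeartbeats 1000000
set_option maxHeartbeats 1000000

/-- The subfield `F^p` of `p`-th powers of `F` (generated as a subfield). -/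
def pPow (p : ℕ) (F : Type*) [Field F] : Subfield F :=
  Subfield.closure (Set.range fun x : F => x ^ p)

/-- The degree `[F^p(S) : F^p]`. -/
noncomputable def pDeg (p : ℕ) {F : Type*} [Field F] (S : Set F) : ℕ :=
  Module.finrank ↥(pPow p F) ↥(IntermediateField.adjoin ↥(pPow p F) S)

/-- A finite family `a : ι → F` is `p`-independent over `F` if
`[F^p(a i, i : ι) : F^p] = p ^ #ι`. -/
def pIndep (p : ℕ) {F : Type*} [Field F] {ι : Type*} [Fintype ι] (a : ι → F) : Prop :=
  pDeg p (Set.range a) = p ^ Fintype.card ι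

/-- The defect `i_d(φ_E)` of the diagonal quasilinear `p`-form with coefficients `a` over `E`:
the `E`-dimension of its zero set (an `E`-subspace in characteristic `p`). -/
noncomputable def defect (p : ℕ) (E : Type*) [Field E] {ι : Type*} [Fintype ι] (a : ι → E) : ℕ :=
  Module.finrank E ↥(Submodule.span E {x : ι → E | ∑ i, a i * x i ^ p = 0})

/-- A diagonal quasilinear `p`-form is anisotropic over `E`. -/
def Anisotropic (p : ℕ) (E : Type*) [Field E] {ι : Type*} [Fintype ι] (a : ι → E) : Prop :=
  ∀ x : ι → E, ∑ i, a i * x i ^ p = 0 → x = 0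

/-- The value set `D_E(φ)` of a diagonal quasilinear `p`-form. -/
def valueSet (p : ℕ) (E : Type*) [Field E] {ι : Type*} [Fintype ι] (a : ι → E) : Set E :=
  {y | ∃ x : ι → E, y = ∑ i, a i * x i ^ p}

section Aux1
variable (p : ℕ) [hp : Fact p.Prime] (E : Type*) [Field E] [CharP E p] {ι : Type*} [Fintype ι]

def zeroSet (aa : ι → E) : Submodule E (ι → E) where
  carrier := {x | ∑ i, aa i * x i ^ p = 0}
  add_mem' := by
    intro x y hx hy
    simp only [Set.mem_setOf_eq] at *
    have h : ∀ i ∈ Finset.univ, aa i * (x i + y i) ^ p = aa i * x i ^ p + aa i * y i ^ p := by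
      intro i _; rw [add_pow_char, mul_add]
    rw [show (fun i => aa i * (x + y) i ^ p) = fun i => aa i * (x i + y i) ^ p from rfl] at *
    rw [Finset.sum_congr rfl h, Finset.sum_add_distrib, hx, hy, add_zero]
  zero_mem' := by
    simp [zero_pow hp.out.ne_zero]
  smul_mem' := by
    intro c x hx
    simp only [Set.mem_setOf_eq] at *
    have h : ∀ i ∈ Finset.univ, aa i * (c • x) i ^ p = c ^ p * (aa i * x i ^ p) := by
      intro i _; simp only [Pi.smul_apply, smul_eq_mul]; rw [mul_pow]; ring
    rw [Finset.sum_congr rfl h, ← Finset.mul_sum, hx, mul_zero]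

lemma defect_eq (aa : ι → E) : defect p E aa = Module.finrank E ↥(zeroSet p E aa) := by
  have h : Submodule.span E {x : ι → E | ∑ i, aa i * x i ^ p = 0} = zeroSet p E aa := by
    rw [show {x : ι → E | ∑ i, aa i * x i ^ p = 0} = (zeroSet p E aa : Set (ι → E)) from rfl,
      Submodule.span_eq]
  unfold defect; rw [h]

lemma defect_le (n : ℕ) (aa : Fin (n + 1) → E) (h0 : aa 0 = 1) :
    defect p E aa ≤ n := by
  rw [defect_eq]
  have hlt : zeroSet p E aa < ⊤ := by
    rw [lt_top_iff_ne_top]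
    intro htop
    have hmem : (Pi.single 0 1 : Fin (n + 1) → E) ∈ zeroSet p E aa := htop ▸ Submodule.mem_top
    have : ∑ i, aa i * (Pi.single 0 1 : Fin (n + 1) → E) i ^ p = 0 := hmem
    rw [Finset.sum_eq_single 0 (by
      intro i _ hi
      rw [Pi.single_eq_of_ne hi, zero_pow hp.out.ne_zero, mul_zero]) (by simp)] at this
    simp [h0] at this
  have h2 := Submodule.finrank_lt (K := E) (V := Fin (n + 1) → E) hlt.ne
  rw [Module.finrank_fin_fun] at h2
  omega

end Aux1

lemma pow_mem_pPow (p : ℕ) {F : Type*} [Field F] (x : F) : x ^ p ∈ pPow p F :=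
  Subfield.subset_closure ⟨x, rfl⟩

section Mono
variable (p : ℕ) [hp : Fact p.Prime] {F : Type*} [Field F] {m : ℕ}

/-- The monomial `∏ aᵢ^(eᵢ)` -/
def mono (a : Fin m → F) (e : Fin m → Fin p) : F := ∏ i, a i ^ (e i : ℕ)

omit hp in
lemma mono_mul (a : Fin m → F) (e f : Fin m → Fin p) :
    ∃ k ∈ pPow p F, mono p a e * mono p a f = k * mono p a (e + f) := by
  refine ⟨∏ i, (a i ^ p) ^ (((e i : ℕ) + (f i : ℕ)) / p),
    Subfield.prod_mem _ (fun i _ => Subfield.pow_mem _ (pow_mem_pPow p _) _), ?_⟩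
  unfold mono
  rw [← Finset.prod_mul_distrib, ← Finset.prod_mul_distrib]
  refine Finset.prod_congr rfl fun i _ => ?_
  rw [← pow_add, ← pow_mul, ← pow_add]
  congr 1
  have hv : ((e + f) i : ℕ) = ((e i : ℕ) + (f i : ℕ)) % p := by
    show ((e i + f i : Fin p) : ℕ) = _
    rw [Fin.add_def]
  rw [hv]
  have h2 := Nat.div_add_mod ((e i : ℕ) + (f i : ℕ)) p
  omega

omit hp in
lemma algebraMap_pPow_apply (k : ↥(pPow p F)) : algebraMap ↥(pPow p F) F k = ↑k := rfl

omit hp in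
lemma smul_pPow (k : ↥(pPow p F)) (x : F) : k • x = (k : F) * x := rfl

lemma adjoin_subset_span (a : Fin m → F) (I : Set (Fin m)) :
    (IntermediateField.adjoin ↥(pPow p F) (a '' I) : Set F) ⊆
      (Submodule.span ↥(pPow p F) (mono p a '' {e | ∀ i, i ∉ I → e i = 0}) : Set F) := by
  classical
  have halg : ∀ y ∈ a '' I, IsAlgebraic ↥(pPow p F) y := by
    rintro y ⟨i, -, rfl⟩
    refine (IsIntegral.of_pow hp.out.pos ?_).isAlgebraic
    have h := isIntegral_algebraMap (R := ↥(pPow p F)) (A := F)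
      (x := (⟨a i ^ p, pow_mem_pPow p _⟩ : ↥(pPow p F)))
    rwa [algebraMap_pPow_apply] at h
  have h1 : (IntermediateField.adjoin ↥(pPow p F) (a '' I)).toSubalgebra
      = Algebra.adjoin ↥(pPow p F) (a '' I) :=
    IntermediateField.adjoin_toSubalgebra_of_isAlgebraic halg
  intro x hx
  have hx' : x ∈ Algebra.adjoin ↥(pPow p F) (a '' I) := by
    rw [← h1]; exact hx
  rw [← Subalgebra.mem_toSubmodule, Algebra.adjoin_eq_span] at hx'
  set S : Set F := mono p a '' {e | ∀ i, i ∉ I → e i = 0} with hS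
  -- span of products lands in span S
  have hmulS : Submodule.span ↥(pPow p F) S * Submodule.span ↥(pPow p F) S
      ≤ Submodule.span ↥(pPow p F) S := by
    rw [Submodule.span_mul_span, Submodule.span_le]
    rintro z ⟨x1, ⟨e, he, rfl⟩, y1, ⟨f, hf, rfl⟩, rfl⟩
    obtain ⟨k, hk, hke⟩ := mono_mul p a e f
    have hef : e + f ∈ {e : Fin m → Fin p | ∀ i, i ∉ I → e i = 0} := by
      intro i hi
      show e i + f i = 0
      rw [he i hi, hf i hi, add_zero]
    show mono p a e * mono p a f ∈ _
    have heq : mono p a e * mono p a f = (⟨k, hk⟩ : ↥(pPow p F)) • mono p a (e + f) := by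
      rw [smul_pPow]; exact hke
    rw [heq]
    exact Submodule.smul_mem _ _ (Submodule.subset_span ⟨e + f, hef, rfl⟩)
  have hclos : ∀ y ∈ Submonoid.closure (a '' I), y ∈ Submodule.span ↥(pPow p F) S := by
    intro y hy
    induction hy using Submonoid.closure_induction with
    | mem z hz =>
      obtain ⟨i, hi, rfl⟩ := hz
      have : a i = mono p a (fun t => if t = i then (⟨1, hp.out.one_lt⟩ : Fin p) else 0) := by
        unfold mono
        rw [Finset.prod_eq_single i (fun t _ ht => by simp [if_neg ht]) (by simp)]
        simp
      rw [this]
      refine Submodule.subset_span ⟨_, fun t ht => ?_, rfl⟩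
      have htne : t ≠ i := fun h => ht (by rw [h]; exact hi)
      simp only [if_neg htne]
    | one =>
      have : (1 : F) = mono p a 0 := by unfold mono; simp
      rw [this]
      exact Submodule.subset_span ⟨0, fun i _ => rfl, rfl⟩
    | mul z w hz hw ihz ihw =>
      exact hmulS (Submodule.mul_mem_mul ihz ihw)
  exact Submodule.span_le.mpr (fun y hy => hclos y hy) hx'

lemma mono_linIndep (a : Fin m → F) (ha : pIndep p a) :
    LinearIndependent ↥(pPow p F) (mono p a) := by
  rw [linearIndependent_iff_card_eq_finrank_span]
  have hspan : Submodule.span ↥(pPow p F) (Set.range (mono p a)) =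
      Subalgebra.toSubmodule (IntermediateField.adjoin ↥(pPow p F) (Set.range a)).toSubalgebra := by
    apply le_antisymm
    · rw [Submodule.span_le]
      rintro x ⟨e, rfl⟩
      show mono p a e ∈ IntermediateField.adjoin ↥(pPow p F) (Set.range a)
      exact prod_mem fun i _ => pow_mem (IntermediateField.subset_adjoin _ _ (Set.mem_range_self i)) _
    · intro x hx
      have h := adjoin_subset_span p a Set.univ
      rw [Set.image_univ] at h
      have hset : {e : Fin m → Fin p | ∀ i, i ∉ (Set.univ : Set (Fin m)) → e i = 0}
          = Set.univ := by
        ext e; simp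
      rw [hset, Set.image_univ] at h
      exact h hx
  show Fintype.card (Fin m → Fin p) = Set.finrank ↥(pPow p F) (Set.range (mono p a))
  unfold Set.finrank
  rw [hspan]
  have hfr : Module.finrank ↥(pPow p F)
      ↥(Subalgebra.toSubmodule (IntermediateField.adjoin ↥(pPow p F) (Set.range a)).toSubalgebra)
      = Module.finrank ↥(pPow p F) ↥(IntermediateField.adjoin ↥(pPow p F) (Set.range a)) := rfl
  rw [hfr]
  have hc : Fintype.card (Fin m → Fin p) = p ^ m := by
    rw [Fintype.card_fun]; simp
  rw [hc]
  unfold pIndep pDeg at ha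
  rw [ha]
  simp

lemma S2 (a : Fin m → F) (ha : pIndep p a) (s : ℕ) (hs : s ≤ m)
    (l : Fin (s + 1) → F)
    (hl : ∀ t, l t ∈ IntermediateField.adjoin ↥(pPow p F) (a '' {i : Fin m | s ≤ (i : ℕ)}))
    (hrel : l 0 + ∑ i : Fin s, a (Fin.castLE hs i) * l i.succ = 0) : ∀ t, l t = 0 := by
  classical
  set Es : Set (Fin m → Fin p) := {e | ∀ i, i ∉ {i : Fin m | s ≤ (i : ℕ)} → e i = 0} with hEs
  haveI : Fintype ↥Es := (Set.toFinite Es).fintype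
  have hspan : ∀ t, l t ∈ Submodule.span ↥(pPow p F)
      (Set.range fun e : ↥Es => mono p a (e : Fin m → Fin p)) := by
    intro t
    have h := adjoin_subset_span p a {i : Fin m | s ≤ (i : ℕ)} (hl t)
    rwa [Set.image_eq_range] at h
  choose g hg using fun t => (Submodule.mem_span_range_iff_exists_fun _).mp (hspan t)
  set c : Fin (s + 1) → F := Fin.cases 1 (fun i => a (Fin.castLE hs i)) with hc
  set ι : Fin (s + 1) × ↥Es → (Fin m → Fin p) := fun te =>
    fun r => if (r : ℕ) + 1 = (te.1 : ℕ) then (⟨1, hp.out.one_lt⟩ : Fin p)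
      else (te.2 : Fin m → Fin p) r with hι
  have hmem0 : ∀ (e : ↥Es) (r : Fin m), (r : ℕ) < s → (e : Fin m → Fin p) r = 0 := by
    intro e r hr
    exact e.2 r (by simp only [Set.mem_setOf_eq]; omega)
  have hνval : ∀ te : Fin (s + 1) × ↥Es, mono p a (ι te) = c te.1 * mono p a ↑te.2 := by
    rintro ⟨t, e⟩
    induction t using Fin.cases with
    | zero =>
      have h0 : ι (0, e) = (e : Fin m → Fin p) := by
        funext r; simp [hι]
      rw [h0]; simp [hc]
    | succ i =>
      set r0 : Fin m := Fin.castLE hs i with hr0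
      have hcs : c i.succ = a r0 := by simp [hc, hr0]
      have hι0 : (ι (i.succ, e) r0 : ℕ) = 1 := by
        have : ((r0 : ℕ) + 1 = ((i.succ : Fin (s + 1)) : ℕ)) := by
          simp [hr0]
        simp [hι, this]
      have hιr : ∀ r, r ≠ r0 → ι (i.succ, e) r = (e : Fin m → Fin p) r := by
        intro r hr
        have hne : ¬((r : ℕ) + 1 = ((i.succ : Fin (s + 1)) : ℕ)) := by
          intro hcon
          apply hr
          apply Fin.ext
          simp only [hr0, Fin.coe_castLE]
          simp only [Fin.val_succ] at hcon
          omega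
        have hne2 : (r : ℕ) ≠ (i : ℕ) := by
          intro hcon
          exact hr (Fin.ext (by simp [hr0, hcon]))
        simp [hι, hne2]
      have he0 : ((e : Fin m → Fin p) r0 : ℕ) = 0 := by
        rw [hmem0 e r0 (by simp [hr0])]
        rfl
      show (∏ r, a r ^ ((ι (i.succ, e)) r : ℕ)) = c i.succ * ∏ r, a r ^ (((e : Fin m → Fin p)) r : ℕ)
      rw [← Finset.mul_prod_erase Finset.univ (fun r => a r ^ ((ι (i.succ, e)) r : ℕ))
        (Finset.mem_univ r0),
        ← Finset.mul_prod_erase Finset.univ (fun r => a r ^ (((e : Fin m → Fin p)) r : ℕ))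
        (Finset.mem_univ r0)]
      have hprod : ∏ r ∈ Finset.univ.erase r0, a r ^ ((ι (i.succ, e)) r : ℕ)
          = ∏ r ∈ Finset.univ.erase r0, a r ^ (((e : Fin m → Fin p)) r : ℕ) :=
        Finset.prod_congr rfl fun r hr => by rw [hιr r (Finset.ne_of_mem_erase hr)]
      rw [hprod, hι0, hcs, he0]
      ring
  have hinj : Function.Injective ι := by
    rintro ⟨t, e⟩ ⟨t', e'⟩ h
    have happ : ∀ r, ι (t, e) r = ι (t', e') r := fun r => congrFun h r
    have key : ∀ (u u' : Fin (s + 1)) (f f' : ↥Es), (∀ r, ι (u, f) r = ι (u', f') r) →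
        0 < (u : ℕ) → (u : ℕ) ≠ (u' : ℕ) → False := by
      intro u u' f f' happ hu hne
      have hr : (u : ℕ) - 1 < m := by
        have := u.isLt; omega
      set r : Fin m := ⟨(u : ℕ) - 1, hr⟩ with hrdef
      have hcond : (r : ℕ) + 1 = (u : ℕ) := by
        simp [hrdef]; omega
      have hL : ι (u, f) r = (⟨1, hp.out.one_lt⟩ : Fin p) := by
        simp [hι, hcond]
      have hcond' : ¬((r : ℕ) + 1 = (u' : ℕ)) := by
        rw [hcond]; exact hne
      have hR : ι (u', f') r = 0 := by
        simp only [hι, if_neg hcond']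
        refine hmem0 f' r ?_
        have := u.isLt
        simp [hrdef]; omega
      rw [happ r, hR] at hL
      exact absurd (congrArg Fin.val hL.symm) one_ne_zero
    have ht : (t : ℕ) = (t' : ℕ) := by
      by_contra hne
      rcases Nat.eq_zero_or_pos (t : ℕ) with h0 | h0
      · exact key t' t e' e (fun r => (happ r).symm) (by omega) (by omega)
      · exact key t t' e e' happ h0 hne
    have he : e = e' := by
      apply Subtype.ext; funext r
      by_cases hcase : (r : ℕ) + 1 = (t : ℕ)
      · have hlt : (r : ℕ) < s := by
          have := t.isLt; omega
        rw [hmem0 e r hlt, hmem0 e' r hlt]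
      · have h1 := happ r
        have hcase' : ¬((r : ℕ) + 1 = (t' : ℕ)) := by rw [← ht]; exact hcase
        simpa [hι, hcase, hcase'] using h1
    exact Prod.ext (Fin.ext ht) he
  have hli : LinearIndependent ↥(pPow p F) (mono p a ∘ ι) := (mono_linIndep p a ha).comp ι hinj
  have hsum : ∑ te : Fin (s + 1) × ↥Es, g te.1 te.2 • (mono p a ∘ ι) te = 0 := by
    rw [Fintype.sum_prod_type]
    have ht : ∀ t : Fin (s + 1), ∑ e : ↥Es, g t e • (mono p a ∘ ι) (t, e) = c t * l t := by
      intro t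
      rw [← hg t, Finset.mul_sum]
      refine Finset.sum_congr rfl fun e _ => ?_
      rw [Function.comp_apply, hνval (t, e), mul_smul_comm]
    rw [Finset.sum_congr rfl fun t _ => ht t, Fin.sum_univ_succ]
    have hc0 : c 0 = 1 := by simp [hc]
    have hcs : ∀ i : Fin s, c i.succ = a (Fin.castLE hs i) := fun i => by simp [hc]
    rw [hc0, one_mul]
    rw [Finset.sum_congr rfl fun i _ => by rw [hcs i]]
    exact hrel
  have hg0 := Fintype.linearIndependent_iff.mp hli _ hsum
  intro t
  rw [← hg t]
  refine Finset.sum_eq_zero fun e _ => ?_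
  rw [show g t e = 0 from hg0 (t, e), zero_smul]

end Mono

lemma S1 (p : ℕ) [Fact p.Prime] {F Ω : Type*} [Field F] [Field Ω] [Algebra F Ω]
    [CharP Ω p] {m : ℕ} (a : Fin m → F) (s : ℕ) (β : Fin m → Ω)
    (hβp : ∀ i, β i ^ p = algebraMap F Ω (a i))
    (x : Ω) (hx : x ∈ IntermediateField.adjoin F (β '' {i : Fin m | s ≤ (i : ℕ)})) :
    ∃ l : F, l ∈ IntermediateField.adjoin ↥(pPow p F) (a '' {i : Fin m | s ≤ (i : ℕ)})
      ∧ algebraMap F Ω l = x ^ p := by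
  induction hx using IntermediateField.adjoin_induction with
  | mem z hz =>
    obtain ⟨i, hi, rfl⟩ := hz
    exact ⟨a i, IntermediateField.subset_adjoin _ _ ⟨i, hi, rfl⟩, (hβp i).symm⟩
  | algebraMap f =>
    refine ⟨f ^ p, ?_, by rw [map_pow]⟩
    have h : f ^ p = algebraMap ↥(pPow p F) F ⟨f ^ p, pow_mem_pPow p f⟩ := rfl
    rw [h]
    exact (IntermediateField.adjoin ↥(pPow p F) _).algebraMap_mem _
  | add x y hx hy ihx ihy =>
    obtain ⟨l1, h1, e1⟩ := ihx; obtain ⟨l2, h2, e2⟩ := ihy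
    exact ⟨l1 + l2, add_mem h1 h2, by rw [map_add, e1, e2, add_pow_char]⟩
  | inv x hx ihx =>
    obtain ⟨l, h1, e1⟩ := ihx
    exact ⟨l⁻¹, inv_mem h1, by rw [map_inv₀, e1, inv_pow]⟩
  | mul x y hx hy ihx ihy =>
    obtain ⟨l1, h1, e1⟩ := ihx; obtain ⟨l2, h2, e2⟩ := ihy
    exact ⟨l1 * l2, mul_mem h1 h2, by rw [map_mul, e1, e2, mul_pow]⟩

def truncSub (E : Type*) [Field E] (n k : ℕ) : Submodule E (Fin n → E) where
  carrier := {x | ∀ t : Fin n, k ≤ (t : ℕ) → x t = 0}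
  add_mem' := fun hx hy t ht => by
    simp only [Pi.add_apply, hx t ht, hy t ht, add_zero]
  zero_mem' := fun t ht => rfl
  smul_mem' := fun c x hx t ht => by
    simp only [Pi.smul_apply, hx t ht, smul_eq_mul, mul_zero]

lemma finrank_truncSub (E : Type*) [Field E] (n k : ℕ) (hk : k ≤ n) :
    Module.finrank E ↥(truncSub E n k) = k := by
  classical
  let eqv : (Fin k → E) ≃ₗ[E] ↥(truncSub E n k) := {
    toFun := fun y => ⟨fun t => if h : (t : ℕ) < k then y ⟨t, h⟩ else 0,
      fun t ht => by simp [Nat.not_lt.mpr ht]⟩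
    map_add' := by
      intro y z; apply Subtype.ext; funext t
      by_cases h : (t : ℕ) < k <;> simp [h]
    map_smul' := by
      intro cc y; apply Subtype.ext; funext t
      by_cases h : (t : ℕ) < k <;> simp [h]
    invFun := fun x i => (x : Fin n → E) (Fin.castLE hk i)
    left_inv := by
      intro y; funext i
      simp only [Fin.coe_castLE, Fin.is_lt, dif_pos]
    right_inv := by
      intro x; apply Subtype.ext; funext t
      by_cases h : (t : ℕ) < k
      · simp only [dif_pos h]
        congr 1
      · simp only [dif_neg h]
        exact (x.2 t (Nat.not_lt.mp h)).symm
  }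
  rw [← LinearEquiv.finrank_eq eqv, Module.finrank_fin_fun]


universe u v

/-- The full splitting pattern of a minimal `p`-form `⟨1,a₁,…,a_m⟩` is `{1,…,m+1}`. -/
theorem fullSplittingPattern_minimal (p : ℕ) [Fact p.Prime] (F : Type u) [Field F] [CharP F p]
    (m : ℕ) (a : Fin m → F) (ha : pIndep p a) :
    (∀ (E : Type v) (_ : Field E) (_ : Algebra F E),
        1 ≤ m + 1 - defect p E (fun i : Fin (m + 1) => algebraMap F E ((Fin.cons (1 : F) a : Fin (m + 1) → F) i)) ∧
        m + 1 - defect p E (fun i : Fin (m + 1) => algebraMap F E ((Fin.cons (1 : F) a : Fin (m + 1) → F) i)) ≤ m + 1) ∧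
      (∀ j : ℕ, 1 ≤ j → j ≤ m + 1 →
        ∃ (E : Type u) (_ : Field E) (_ : Algebra F E),
          m + 1 - defect p E (fun i : Fin (m + 1) => algebraMap F E ((Fin.cons (1 : F) a : Fin (m + 1) → F) i)) = j) := by
  classical
  have hp : p.Prime := Fact.out
  constructor
  · intro E _ _
    haveI : CharP E p := charP_of_injective_algebraMap (algebraMap F E).injective p
    refine ⟨?_, by omega⟩
    have h0 : (fun i : Fin (m + 1) => algebraMap F E ((Fin.cons (1 : F) a : Fin (m + 1) → F) i)) 0
        = 1 := by simp
    have h := defect_le p E m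
      (fun i : Fin (m + 1) => algebraMap F E ((Fin.cons (1 : F) a : Fin (m + 1) → F) i)) h0
    omega
  · intro j hj1 hj2
    obtain ⟨s, rfl⟩ : ∃ s, j = s + 1 := ⟨j - 1, by omega⟩
    have hs : s ≤ m := by omega
    set Ω := AlgebraicClosure F with hΩ
    haveI : CharP Ω p := charP_of_injective_algebraMap (algebraMap F Ω).injective p
    set β : Fin m → Ω := fun i => (frobeniusEquiv Ω p).symm (algebraMap F Ω (a i)) with hβ
    have hβp : ∀ i, β i ^ p = algebraMap F Ω (a i) := fun i => frobeniusEquiv_symm_pow_p Ω p _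
    set Em : IntermediateField F Ω :=
      IntermediateField.adjoin F (β '' {i : Fin m | s ≤ (i : ℕ)}) with hEm
    refine ⟨↥Em, inferInstance, inferInstance, ?_⟩
    haveI : CharP ↥Em p := charP_of_injective_algebraMap (algebraMap F ↥Em).injective p
    set c' : Fin (m + 1) → ↥Em :=
      fun i => algebraMap F ↥Em ((Fin.cons (1 : F) a : Fin (m + 1) → F) i) with hc'
    suffices hdef : defect p ↥Em c' = m - s by
      show m + 1 - defect p ↥Em c' = s + 1
      omega
    rw [defect_eq]
    set Z := zeroSet p ↥Em c' with hZ
    have hβmem : ∀ i : Fin m, s ≤ (i : ℕ) → β i ∈ Em := fun i hi =>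
      IntermediateField.subset_adjoin _ _ ⟨i, hi, rfl⟩
    -- lower bound vectors
    have hrlt : ∀ i : Fin (m - s), s + (i : ℕ) < m := fun i => by have := i.isLt; omega
    set r : Fin (m - s) → Fin m := fun i => ⟨s + i, hrlt i⟩ with hr
    set bE : Fin (m - s) → ↥Em := fun i => ⟨β (r i), hβmem (r i) (by simp [hr])⟩ with hbE
    have hbEp : ∀ i, bE i ^ p = algebraMap F ↥Em (a (r i)) := by
      intro i
      apply Subtype.ext
      push_cast [hbE]
      rw [hβp]
    set v : Fin (m - s) → (Fin (m + 1) → ↥Em) := fun i t =>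
      if t = 0 then bE i else if (t : ℕ) = s + (i : ℕ) + 1 then -1 else 0 with hv
    have hvZ : ∀ i, v i ∈ Z := by
      intro i
      show ∑ t, c' t * (v i t) ^ p = 0
      set t1 : Fin (m + 1) := ⟨s + (i : ℕ) + 1, by omega⟩ with ht1
      have ht1ne : t1 ≠ 0 := by
        simp [ht1, Fin.ext_iff]
      rw [← Finset.sum_subset (Finset.subset_univ {0, t1}) ?_]
      · rw [Finset.sum_pair (Ne.symm ht1ne)]
        have hv0 : v i 0 = bE i := by simp [hv]
        have hvt1 : v i t1 = -1 := by
          simp [hv, if_neg ht1ne, ht1]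
        rw [hv0, hvt1]
        have hc0 : c' 0 = 1 := by simp [hc']
        have hct1 : c' t1 = algebraMap F ↥Em (a (r i)) := by
          rw [show t1 = Fin.succ (r i) from Fin.ext (by simp [ht1, hr])]
          simp [hc', Fin.cons_succ]
        rw [hc0, hct1, one_mul, hbEp i, neg_one_pow_char (R := ↥Em) (p := p)]
        ring
      · intro t _ htnot
        simp only [Finset.mem_insert, Finset.mem_singleton] at htnot
        push_neg at htnot
        have hvz : v i t = 0 := by
          simp only [hv, if_neg htnot.1]
          rw [if_neg]
          intro hval
          exact htnot.2 (Fin.ext (by simp [ht1, hval]))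
        rw [hvz, zero_pow hp.ne_zero, mul_zero]
    have hvind : LinearIndependent ↥Em v := by
      rw [Fintype.linearIndependent_iff]
      intro g hg i
      set t1 : Fin (m + 1) := ⟨s + (i : ℕ) + 1, by omega⟩ with ht1
      have h1 := congrFun hg t1
      simp only [Finset.sum_apply, Pi.smul_apply, smul_eq_mul, Pi.zero_apply] at h1
      rw [Finset.sum_eq_single i ?_ (by simp)] at h1
      · have hvt1 : v i t1 = -1 := by
          have ht1ne : t1 ≠ 0 := by simp [ht1, Fin.ext_iff]
          have hcond : ((t1 : ℕ) = s + (i : ℕ) + 1) := rfl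
          simp [hv, if_neg ht1ne, hcond]
        rw [hvt1] at h1
        simpa using h1
      · intro j _ hji
        have hvz : v j t1 = 0 := by
          have ht1ne : t1 ≠ 0 := by simp [ht1, Fin.ext_iff]
          have hcond : ¬((t1 : ℕ) = s + (j : ℕ) + 1) := by
            intro hval
            have hval' : s + (i : ℕ) + 1 = s + (j : ℕ) + 1 := hval
            exact hji (Fin.ext (by omega))
          simp only [hv, if_neg ht1ne]
          rw [if_neg hcond]
        rw [hvz, mul_zero]
    have hlower : m - s ≤ Module.finrank ↥Em ↥Z := by
      have hcomp : LinearIndependent ↥Em (fun i => (⟨v i, hvZ i⟩ : ↥Z)) := by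
        apply LinearIndependent.of_comp Z.subtype
        exact hvind
      have := hcomp.fintype_card_le_finrank
      simpa using this
    -- upper bound
    set U := truncSub ↥Em (m + 1) (s + 1) with hU
    have hinj : ∀ t : Fin (s + 1), ((Fin.castLE (show s + 1 ≤ m + 1 by omega) t : Fin (m + 1))) = t.castLE (by omega) := fun t => rfl
    have hZU : Z ⊓ U = ⊥ := by
      rw [Submodule.eq_bot_iff]
      rintro x ⟨hxZ, hxU⟩
      set inj : Fin (s + 1) → Fin (m + 1) := Fin.castLE (by omega) with hinjdef
      have hinj_inj : Function.Injective inj := Fin.castLE_injective _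
      have hsum0 : ∑ t : Fin (s + 1), c' (inj t) * (x (inj t)) ^ p = 0 := by
        have h1 : ∑ t : Fin (m + 1), c' t * x t ^ p = 0 := hxZ
        rw [← h1]
        rw [← Finset.sum_image (f := fun t => c' t * x t ^ p) (g := inj)
          (fun u _ u' _ h => hinj_inj h)]
        apply Finset.sum_subset (Finset.subset_univ _)
        intro t _ htnot
        have hge : s + 1 ≤ (t : ℕ) := by
          by_contra hlt
          exact htnot (Finset.mem_image.mpr ⟨⟨t, by omega⟩, Finset.mem_univ _, Fin.ext rfl⟩)
        rw [hxU t hge, zero_pow hp.ne_zero, mul_zero]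
      -- extract l
      have hSl : ∀ t : Fin (s + 1), ∃ l : F,
          l ∈ IntermediateField.adjoin ↥(pPow p F) (a '' {i : Fin m | s ≤ (i : ℕ)}) ∧
          algebraMap F ↥Em l = (x (inj t)) ^ p := by
        intro t
        obtain ⟨l, hl1, hl2⟩ := S1 p a s β hβp (x (inj t) : Ω) (x (inj t)).2
        refine ⟨l, hl1, ?_⟩
        apply Subtype.ext
        rw [IsScalarTower.algebraMap_apply F ↥Em Ω] at hl2
        push_cast
        exact hl2
      choose l hlN hlval using hSl
      have hrel : l 0 + ∑ i : Fin s, a (Fin.castLE hs i) * l i.succ = 0 := by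
        apply (algebraMap F ↥Em).injective
        rw [map_zero, map_add, map_sum]
        rw [← hsum0, Fin.sum_univ_succ]
        congr 1
        · rw [hlval 0]
          have : c' (inj 0) = 1 := by
            rw [show inj (0 : Fin (s + 1)) = (0 : Fin (m + 1)) from Fin.ext rfl]
            simp [hc']
          rw [this, one_mul]
        · refine Finset.sum_congr rfl fun i _ => ?_
          rw [map_mul, hlval i.succ]
          have : c' (inj i.succ) = algebraMap F ↥Em (a (Fin.castLE hs i)) := by
            rw [show inj i.succ = Fin.succ (Fin.castLE hs i) from Fin.ext rfl]
            simp [hc', Fin.cons_succ]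
          rw [this]
      have hl0 := S2 p a ha s hs l hlN hrel
      funext t
      by_cases hcase : (t : ℕ) < s + 1
      · have ht : t = inj ⟨(t : ℕ), hcase⟩ := Fin.ext rfl
        have : (x (inj ⟨(t : ℕ), hcase⟩)) ^ p = 0 := by
          rw [← hlval ⟨(t : ℕ), hcase⟩, hl0 ⟨(t : ℕ), hcase⟩, map_zero]
        have hx0 : x (inj ⟨(t : ℕ), hcase⟩) = 0 := pow_eq_zero_iff hp.ne_zero |>.mp this
        rw [ht]; exact hx0
      · exact hxU t (by omega)
    have hfrU : Module.finrank ↥Em ↥U = s + 1 := finrank_truncSub ↥Em (m + 1) (s + 1) (by omega)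
    have hsumrk := Submodule.finrank_sup_add_finrank_inf_eq Z U
    rw [hZU, finrank_bot, add_zero, hfrU] at hsumrk
    have hle := Submodule.finrank_le (Z ⊔ U)
    rw [Module.finrank_fin_fun] at hle
    omega
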